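/- Let f : (0,1) → (0,∞) be continuous with ∫ₐ¹ f(s) ds = +∞ for some (hence all) a ∈ (0,1). Let φ : (0,1) → (0,∞) satisfy φ(x) = C·f(x)^{−1/2}·exp(½∫ₐˣ f(s) ds) for some C > 0, and define ψ(x) = φ(x)·∫ₓ¹ ds/φ(s)². Then for every x ∈ (0,1), 1/(φ(x)·ψ(x)) = f(x), i.e., φ(x)²·∫ₓ¹ ds/φ(s)² = 1/f(x). -/

import Mathlib

open Set MeasureTheory intervalIntegral
open Filter

/-- If `f > 0` is continuous with `∫ₐ¹ f = +∞`, and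
`φ(x) = C·f(x)^{-1/2}·exp(½∫ₐˣ f)`, `ψ(x) = φ(x)·∫ₓ¹ φ(s)⁻² ds`, then
`φ(x)²·∫ₓ¹ φ(s)⁻² ds = 1/f(x)`, i.e. `1/(φ(x)ψ(x)) = f(x)`. -/
theorem stmt_12 (f : ℝ → ℝ)
    (hfc : ContinuousOn f (Set.Ioo 0 1))
    (hf : ∀ x ∈ Set.Ioo (0:ℝ) 1, 0 < f x)
    (a : ℝ) (ha : a ∈ Set.Ioo (0:ℝ) 1)
    (hdiv : ∀ b ∈ Set.Ioo (0:ℝ) 1,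
      ∫⁻ s in Set.Ioo b 1, ENNReal.ofReal (f s) = ⊤)
    (C : ℝ) (hC : 0 < C) (φ ψ : ℝ → ℝ)
    (hφ : ∀ x ∈ Set.Ioo (0:ℝ) 1,
      φ x = C * (Real.sqrt (f x))⁻¹ * Real.exp ((1/2) * ∫ s in a..x, f s))
    (hφpos : ∀ x ∈ Set.Ioo (0:ℝ) 1, 0 < φ x)
    (hint : ∀ x ∈ Set.Ioo (0:ℝ) 1,
      IntervalIntegrable (fun s => ((φ s) ^ 2)⁻¹) MeasureTheory.volume x 1)
    (hψ : ∀ x ∈ Set.Ioo (0:ℝ) 1, ψ x = φ x * ∫ s in x..1, ((φ s) ^ 2)⁻¹) :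
    ∀ x ∈ Set.Ioo (0:ℝ) 1,
      (φ x) ^ 2 * (∫ s in x..1, ((φ s) ^ 2)⁻¹) = 1 / f x ∧
      (φ x * ψ x)⁻¹ = f x := by
  obtain ⟨ha0, ha1⟩ := ha
  have hIopen : IsOpen (Set.Ioo (0:ℝ) 1) := isOpen_Ioo
  have hsub : ∀ {u v : ℝ}, u ∈ Set.Ioo (0:ℝ) 1 → v ∈ Set.Ioo (0:ℝ) 1 →
      Set.uIcc u v ⊆ Set.Ioo (0:ℝ) 1 := fun hu hv =>
    Set.ordConnected_Ioo.uIcc_subset hu hv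
  have hfint : ∀ u ∈ Set.Ioo (0:ℝ) 1, ∀ v ∈ Set.Ioo (0:ℝ) 1,
      IntervalIntegrable f volume u v := fun u hu v hv =>
    (hfc.mono (hsub hu hv)).intervalIntegrable
  set F : ℝ → ℝ := fun y => ∫ s in a..y, f s with hFdef
  have hFderiv : ∀ s ∈ Set.Ioo (0:ℝ) 1, HasDerivAt F (f s) s := by
    intro s hs
    exact intervalIntegral.integral_hasDerivAt_right (hfint a ⟨ha0, ha1⟩ s hs)
      (hfc.stronglyMeasurableAtFilter hIopen s hs)
      (hfc.continuousAt (hIopen.mem_nhds hs))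
  have hFcont : ContinuousOn F (Set.Ioo 0 1) := fun s hs =>
    ((hFderiv s hs).continuousAt).continuousWithinAt
  -- F additivity
  have hFadd : ∀ u ∈ Set.Ioo (0:ℝ) 1, ∀ v ∈ Set.Ioo (0:ℝ) 1,
      (∫ s in u..v, f s) = F v - F u := by
    intro u hu v hv
    have := intervalIntegral.integral_add_adjacent_intervals
      (hfint a ⟨ha0, ha1⟩ u hu) (hfint u hu v hv)
    simp only [hFdef] at *
    linarith
  set g : ℝ → ℝ := fun s => (C ^ 2)⁻¹ * (f s * Real.exp (-(F s))) with hgdef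
  set G : ℝ → ℝ := fun y => -((C ^ 2)⁻¹ * Real.exp (-(F y))) with hGdef
  have hGderiv : ∀ s ∈ Set.Ioo (0:ℝ) 1, HasDerivAt G (g s) s := by
    intro s hs
    have h1 : HasDerivAt (fun y => Real.exp (-(F y))) (Real.exp (-(F s)) * -(f s)) s :=
      ((hFderiv s hs).neg).exp
    have h2 : HasDerivAt G _ s := (h1.const_mul ((C ^ 2)⁻¹)).neg
    convert h2 using 1
    show (C ^ 2)⁻¹ * (f s * Real.exp (-(F s))) = -((C ^ 2)⁻¹ * (Real.exp (-(F s)) * -(f s)))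
    ring
  have hgφ : ∀ s ∈ Set.Ioo (0:ℝ) 1, ((φ s) ^ 2)⁻¹ = g s := by
    intro s hs
    have hfs := hf s hs
    rw [hφ s hs, hgdef]
    have hsq : Real.sqrt (f s) ^ 2 = f s := Real.sq_sqrt hfs.le
    have hexp : Real.exp ((1/2) * F s) ^ 2 = Real.exp (F s) := by
      rw [sq, ← Real.exp_add]; congr 1; ring
    have hsqpos : 0 < Real.sqrt (f s) := Real.sqrt_pos.2 hfs
    rw [mul_pow, mul_pow, inv_pow, hexp, hsq]
    show _ = (C ^ 2)⁻¹ * (f s * Real.exp (-(F s)))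
    rw [Real.exp_neg]
    field_simp
  have hgc : ContinuousOn g (Set.Ioo 0 1) := by
    apply ContinuousOn.mul continuousOn_const
    exact hfc.mul ((Real.continuous_exp.comp continuous_neg).comp_continuousOn hFcont)
  -- now fix x
  intro x hx
  obtain ⟨hx0, hx1⟩ := hx
  have hxI : x ∈ Set.Ioo (0:ℝ) 1 := ⟨hx0, hx1⟩
  set l : Filter ℝ := nhdsWithin 1 (Set.Ioo x 1) with hldef
  have hlne : l.NeBot := by
    rw [hldef, ← mem_closure_iff_nhdsWithin_neBot, closure_Ioo hx1.ne]
    exact ⟨hx1.le, le_refl 1⟩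
  -- the primitive tends to the full integral
  have htend1 : Tendsto (fun y => ∫ s in x..y, ((φ s) ^ 2)⁻¹) l
      (nhds (∫ s in x..1, ((φ s) ^ 2)⁻¹)) := by
    have hc : ContinuousWithinAt (fun y => ∫ s in x..y, ((φ s) ^ 2)⁻¹) (Set.Icc x 1) 1 := by
      apply intervalIntegral.continuousWithinAt_primitive (measure_singleton 1)
      rw [min_self, max_eq_right hx1.le]
      exact hint x hxI
    exact hc.mono_left (nhdsWithin_mono 1 Set.Ioo_subset_Icc_self)
  -- identity on Ioo x 1
  have hid : ∀ y ∈ Set.Ioo x 1, (∫ s in x..y, ((φ s) ^ 2)⁻¹) = G y - G x := by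
    intro y hy
    have hyI : y ∈ Set.Ioo (0:ℝ) 1 := ⟨hx0.trans hy.1, hy.2⟩
    have hsubxy : Set.uIcc x y ⊆ Set.Ioo (0:ℝ) 1 := hsub hxI hyI
    have h1 : (∫ s in x..y, ((φ s) ^ 2)⁻¹) = ∫ s in x..y, g s :=
      intervalIntegral.integral_congr (fun s hs => hgφ s (hsubxy hs))
    rw [h1]
    exact intervalIntegral.integral_eq_sub_of_hasDerivAt
      (fun s hs => hGderiv s (hsubxy hs))
      ((hgc.mono hsubxy).intervalIntegrable)
  -- F tends to atTop along l
  have hub : ∀ M : ℝ, ∃ y, a ≤ y ∧ x < y ∧ y < 1 ∧ M ≤ F y := by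
    intro M
    by_contra hcon
    push_neg at hcon
    set b : ℝ := max a x with hbdef
    have hbI : b ∈ Set.Ioo (0:ℝ) 1 := ⟨lt_max_iff.2 (Or.inl ha0), max_lt ha1 hx1⟩
    have hb1 : b < 1 := hbI.2
    set y : ℕ → ℝ := fun n => 1 - (1 - b) / (n + 2) with hydef
    have hy_mem : ∀ n, y n ∈ Set.Ioo b 1 := by
      intro n
      have h2 : (0:ℝ) < (n:ℝ) + 2 := by positivity
      constructor
      · rw [hydef]
        have : (1 - b) / (n + 2) < (1 - b) / 1 := by
          apply div_lt_div_of_pos_left (by linarith) one_pos (by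
            have : (0:ℝ) ≤ (n:ℝ) := Nat.cast_nonneg n
            linarith)
        simp at this
        linarith
      · rw [hydef]
        have : 0 < (1 - b) / (n + 2) := div_pos (by linarith) h2
        linarith
    have hymono : Monotone y := by
      intro m n hmn
      rw [hydef]
      simp only
      have h2m : (0:ℝ) < (m:ℝ) + 2 := by positivity
      have h2n : (0:ℝ) < (n:ℝ) + 2 := by positivity
      have : (1 - b) / ((n:ℝ) + 2) ≤ (1 - b) / ((m:ℝ) + 2) := by
        apply div_le_div_of_nonneg_left (by linarith) h2m
        have : (m:ℝ) ≤ (n:ℝ) := Nat.cast_le.2 hmn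
        linarith
      linarith
    have hytend : Tendsto y atTop (nhds 1) := by
      rw [hydef]
      have : Tendsto (fun n : ℕ => (1 - b) / ((n:ℝ) + 2)) atTop (nhds 0) := by
        apply Tendsto.div_atTop tendsto_const_nhds
        exact tendsto_atTop_add_const_right atTop 2 tendsto_natCast_atTop_atTop
      have h := (tendsto_const_nhds (x := (1:ℝ)) (f := atTop)).sub this
      simpa using h
    -- each F (y n) < M
    have hFy : ∀ n, F (y n) ≤ M := by
      intro n
      have h := hcon (y n) (le_trans (le_max_left a x) (hy_mem n).1.le)
        (lt_of_le_of_lt (le_max_right a x) (hy_mem n).1) (hy_mem n).2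
      linarith
    -- union of Ioo b (y n) is Ioo b 1
    have hUnion : (⋃ n, Set.Ioo b (y n)) = Set.Ioo b 1 := by
      ext t
      simp only [Set.mem_iUnion, Set.mem_Ioo]
      constructor
      · rintro ⟨n, h1, h2⟩; exact ⟨h1, h2.trans (hy_mem n).2⟩
      · rintro ⟨h1, h2⟩
        obtain ⟨n, hn⟩ := (hytend.eventually (eventually_gt_nhds h2)).exists
        exact ⟨n, h1, hn⟩
    -- lintegral bound
    have haem : AEMeasurable (fun s => ENNReal.ofReal (f s)) (volume.restrict (Set.Ioo b 1)) := by
      apply ENNReal.measurable_ofReal.comp_aemeasurable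
      exact (hfc.mono (Set.Ioo_subset_Ioo hbI.1.le le_rfl)).aemeasurable measurableSet_Ioo
    set fn : ℕ → ℝ → ENNReal :=
      fun n => (Set.Ioo b (y n)).indicator (fun s => ENNReal.ofReal (f s)) with hfndef
    have hfn_meas : ∀ n, AEMeasurable (fn n) (volume.restrict (Set.Ioo b 1)) := by
      intro n
      apply AEMeasurable.indicator _ measurableSet_Ioo
      exact haem
    have hfn_mono : ∀ s, Monotone (fun n => fn n s) := by
      intro s m n hmn
      rw [hfndef]
      simp only
      apply Set.indicator_le_indicator_of_subset (Set.Ioo_subset_Ioo le_rfl (hymono hmn))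
      intro t; exact bot_le
    have hfn_sup : ∀ s, (⨆ n, fn n s) =
        (Set.Ioo b 1).indicator (fun s => ENNReal.ofReal (f s)) s := by
      intro s
      by_cases hs : s ∈ Set.Ioo b 1
      · rw [Set.indicator_of_mem hs]
        obtain ⟨n, hn⟩ : ∃ n, s ∈ Set.Ioo b (y n) := by
          rw [← hUnion] at hs; exact Set.mem_iUnion.1 hs
        apply le_antisymm
        · apply iSup_le
          intro m
          exact Set.indicator_le_self' (fun _ _ => bot_le) s
        · refine le_trans (le_of_eq ?_) (le_iSup _ n)
          rw [hfndef]; simp only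
          rw [Set.indicator_of_mem hn]
      · rw [Set.indicator_of_notMem hs]
        rw [← hUnion] at hs
        simp only [Set.mem_iUnion, not_exists] at hs
        apply le_antisymm _ zero_le
        apply iSup_le
        intro m
        rw [hfndef]; simp only
        rw [Set.indicator_of_notMem (hs m)]
      -- done
    have hkey : ∫⁻ s in Set.Ioo b 1, ENNReal.ofReal (f s) =
        ⨆ n, ∫⁻ s in Set.Ioo b 1, fn n s := by
      rw [← lintegral_iSup' hfn_meas (ae_of_all _ hfn_mono)]
      have : ∀ s, (⨆ n, fn n s) = (Set.Ioo b 1).indicator (fun s => ENNReal.ofReal (f s)) s :=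
        hfn_sup
      rw [lintegral_congr this, lintegral_indicator measurableSet_Ioo,
        Measure.restrict_restrict measurableSet_Ioo, Set.inter_self]
    have hbound : ∀ n, ∫⁻ s in Set.Ioo b 1, fn n s ≤ ENNReal.ofReal (M - F b) := by
      intro n
      have h1 : ∫⁻ s in Set.Ioo b 1, fn n s = ∫⁻ s in Set.Ioo b (y n), ENNReal.ofReal (f s) := by
        rw [hfndef]
        simp only
        rw [lintegral_indicator measurableSet_Ioo,
          Measure.restrict_restrict measurableSet_Ioo,
          Set.inter_eq_self_of_subset_left (Set.Ioo_subset_Ioo le_rfl (hy_mem n).2.le)]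
      have hyI : y n ∈ Set.Ioo (0:ℝ) 1 := ⟨lt_trans hbI.1 (hy_mem n).1, (hy_mem n).2⟩
      have hfi : IntegrableOn f (Set.Ioo b (y n)) volume := by
        apply (hfc.mono ?_).integrableOn_Icc.mono_set Set.Ioo_subset_Icc_self
        intro t ht
        exact ⟨lt_of_lt_of_le hbI.1 ht.1, lt_of_le_of_lt ht.2 hyI.2⟩
      have hnn : 0 ≤ᵐ[volume.restrict (Set.Ioo b (y n))] f := by
        apply (ae_restrict_iff' measurableSet_Ioo).2
        apply ae_of_all
        intro t ht
        exact (hf t ⟨lt_trans hbI.1 ht.1, lt_trans ht.2 hyI.2⟩).le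
      rw [h1, ← ofReal_integral_eq_lintegral_ofReal hfi hnn]
      apply ENNReal.ofReal_le_ofReal
      have h2 : ∫ s in Set.Ioo b (y n), f s = ∫ s in b..(y n), f s := by
        rw [intervalIntegral.integral_of_le (hy_mem n).1.le,
          MeasureTheory.integral_Ioc_eq_integral_Ioo]
      rw [h2, hFadd b hbI (y n) hyI]
      linarith [hFy n]
    have : ∫⁻ s in Set.Ioo b 1, ENNReal.ofReal (f s) ≤ ENNReal.ofReal (M - F b) := by
      rw [hkey]; exact iSup_le hbound
    rw [hdiv b hbI] at this
    exact absurd this (not_le.mpr ENNReal.ofReal_lt_top)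
  have hFtend : Tendsto F l atTop := by
    rw [tendsto_atTop]
    intro M
    obtain ⟨y₀, hay₀, hxy₀, hy₀1, hMy₀⟩ := hub M
    have hy₀I : y₀ ∈ Set.Ioo (0:ℝ) 1 := ⟨hx0.trans hxy₀, hy₀1⟩
    have hmem : Set.Ioi y₀ ∈ l := by
      rw [hldef]
      exact nhdsWithin_le_nhds (Ioi_mem_nhds hy₀1)
    filter_upwards [hmem, self_mem_nhdsWithin] with z hz hz'
    have hzI : z ∈ Set.Ioo (0:ℝ) 1 := ⟨hx0.trans hz'.1, hz'.2⟩
    have : (0:ℝ) ≤ ∫ s in y₀..z, f s := by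
      apply intervalIntegral.integral_nonneg (le_of_lt hz)
      intro u hu
      exact (hf u ⟨lt_of_lt_of_le hy₀I.1 hu.1, lt_of_le_of_lt hu.2 hzI.2⟩).le
    rw [hFadd y₀ hy₀I z hzI] at this
    linarith
  -- conclude: G y → 0 along l
  have htend2 : Tendsto G l (nhds 0) := by
    rw [hGdef]
    have h1 : Tendsto (fun y => Real.exp (-(F y))) l (nhds 0) :=
      Real.tendsto_exp_atBot.comp (tendsto_neg_atBot_iff.2 hFtend)
    have h2 := (h1.const_mul ((C ^ 2)⁻¹)).neg
    simpa using h2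
  have hL : (∫ s in x..1, ((φ s) ^ 2)⁻¹) = (C ^ 2)⁻¹ * Real.exp (-(F x)) := by
    have e1 : Tendsto (fun y => G y - G x) l (nhds (0 - G x)) := htend2.sub_const _
    have e2 : Tendsto (fun y => ∫ s in x..y, ((φ s) ^ 2)⁻¹) l (nhds (0 - G x)) := by
      apply e1.congr'
      filter_upwards [self_mem_nhdsWithin] with y hy
      exact (hid y hy).symm
    have := tendsto_nhds_unique htend1 e2
    rw [this, hGdef]
    ring
  -- final computation
  have hfx := hf x hxI
  have hfirst : (φ x) ^ 2 * (∫ s in x..1, ((φ s) ^ 2)⁻¹) = 1 / f x := by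
    rw [hL, hφ x hxI]
    have hsq : Real.sqrt (f x) ^ 2 = f x := Real.sq_sqrt hfx.le
    have hexp : Real.exp ((1/2) * F x) ^ 2 = Real.exp (F x) := by
      rw [sq, ← Real.exp_add]; congr 1; ring
    rw [mul_pow, mul_pow, inv_pow, hexp, hsq, Real.exp_neg]
    field_simp
  refine ⟨hfirst, ?_⟩
  rw [hψ x hxI, ← mul_assoc, ← sq, hfirst]
  rw [one_div, inv_inv]
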